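/- Fix a negative token v' ≠ y and regard its hard-negative weight as a function of the temperature, W(t) = exp(p(v')/t) / Σ_{u ∈ V, u ≠ y} exp(p(u)/t) for t > 0. Then at every τ > 0, W is differentiable with derivative W'(τ) = (W(τ)/τ²) · ( Σ_{u ≠ y} w(u)·p(u) − p(v') ), where w(u) = exp(p(u)/τ) / Σ_{u' ≠ y} exp(p(u')/τ) are the hard-negative weights at temperature τ. -/

import Mathlib

open Real Finset

/-- The hard-negative weight of a fixed negative token `v' ≠ y`, viewed
as a function of the temperature `t`, `W t = exp(p v' / t) / ∑_{u ≠ y} exp(p u / t)`,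
is differentiable at every `τ > 0` with derivative
`W τ / τ² * (∑_{u ≠ y} w u * p u − p v')`, where
`w u = exp(p u / τ) / ∑_{u' ≠ y} exp(p u' / τ)`. -/
theorem hard_negative_weight_hasDerivAt
    {V : Type*} [Fintype V] [DecidableEq V] (hV : 1 < Fintype.card V)
    (p : V → ℝ) (y : V) (τ : ℝ) (hτ : 0 < τ) (v' : V) (hv' : v' ≠ y) :
    HasDerivAt
      (fun t : ℝ =>
        Real.exp (p v' / t) / (∑ u ∈ Finset.univ.filter (· ≠ y), Real.exp (p u / t)))
      ((Real.exp (p v' / τ) / (∑ u ∈ Finset.univ.filter (· ≠ y), Real.exp (p u / τ))) / τ ^ 2 *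
        ((∑ u ∈ Finset.univ.filter (· ≠ y),
            (Real.exp (p u / τ) /
              (∑ u' ∈ Finset.univ.filter (· ≠ y), Real.exp (p u' / τ))) * p u) - p v'))
      τ := by
  set F := Finset.univ.filter (· ≠ y) with hF
  have hv'F : v' ∈ F := by simp [hF, hv']
  have hd : ∀ u : V, HasDerivAt (fun t : ℝ => Real.exp (p u / t))
      (Real.exp (p u / τ) * (-(p u) / τ ^ 2)) τ := by
    intro u
    have h1 : HasDerivAt (fun t : ℝ => p u / t) (-(p u) / τ ^ 2) τ := by
      have := (hasDerivAt_inv hτ.ne').const_mul (p u)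
      simpa [div_eq_mul_inv, neg_div, mul_comm, mul_div_assoc] using this
    simpa using h1.exp
  have hS : HasDerivAt (fun t : ℝ => ∑ u ∈ F, Real.exp (p u / t))
      (∑ u ∈ F, Real.exp (p u / τ) * (-(p u) / τ ^ 2)) τ :=
    HasDerivAt.fun_sum (fun u _ => hd u)
  have hSpos : 0 < ∑ u ∈ F, Real.exp (p u / τ) :=
    Finset.sum_pos (fun u _ => Real.exp_pos _) ⟨v', hv'F⟩
  have := (hd v').div hS hSpos.ne'
  refine this.congr_deriv ?_
  set S := ∑ u ∈ F, Real.exp (p u / τ) with hS0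
  have hsum : ∑ u ∈ F, Real.exp (p u / τ) * (-(p u) / τ ^ 2)
      = -(∑ u ∈ F, Real.exp (p u / τ) * p u) / τ ^ 2 := by
    rw [← Finset.sum_neg_distrib, Finset.sum_div]
    apply Finset.sum_congr rfl; intro u _; ring
  have hsum2 : ∑ u ∈ F, Real.exp (p u / τ) / S * p u
      = (∑ u ∈ F, Real.exp (p u / τ) * p u) / S := by
    rw [Finset.sum_div]
    apply Finset.sum_congr rfl; intro u _; ring
  rw [hsum, hsum2]
  have hτ2 : (τ : ℝ) ^ 2 ≠ 0 := pow_ne_zero _ hτ.ne'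
  field_simp
  ring
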